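/- For all $x,y \in R(r,1)$ with $0<r<1$, the inequality chain $\frac{1}{2}s_{R(r,1)}(x,y) \le j^*_{R(r,1)}(x,y) \le \mathrm{th}\frac{\delta_{R(r,1)}(x,y)}{2} \le 2 j^*_{R(r,1)}(x,y) \le 2 s_{R(r,1)}(x,y)$ holds. -/

import Mathlib

open Real Set

/-- The annular ring `R(r,1) = {z : r < |z| < 1}`. -/
def annulus (r : ℝ) : Set ℂ := {z : ℂ | r < ‖z‖ ∧ ‖z‖ < 1}

/-- The triangular ratio metric `s_G`. -/
noncomputable def sMetric (G : Set ℂ) (x y : ℂ) : ℝ :=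
  ‖x - y‖ /
    sInf ((fun z => ‖x - z‖ + ‖z - y‖) '' frontier G)

/-- The `j*`-metric. -/
noncomputable def jStar (G : Set ℂ) (x y : ℂ) : ℝ :=
  ‖x - y‖ /
    (‖x - y‖ +
      2 * min (Metric.infDist x (frontier G)) (Metric.infDist y (frontier G)))

/-- The (absolute) cross-ratio `|a,x,b,y|`. -/
noncomputable def crossRatio (a x b y : ℂ) : ℝ :=
  (‖a - b‖ * ‖x - y‖) / (‖a - x‖ * ‖b - y‖)

/-- The Möbius (Seittenranta) metric `δ_G`. -/
noncomputable def deltaMetric (G : Set ℂ) (x y : ℂ) : ℝ :=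
  sSup ((fun p : ℂ × ℂ => Real.log (1 + crossRatio p.1 x p.2 y)) '' (frontier G ×ˢ frontier G))

lemma annulus_isOpen (r : ℝ) : IsOpen (annulus r) :=
  (isOpen_Ioo (a := r) (b := 1)).preimage continuous_norm

lemma closure_annulus (r : ℝ) (hr0 : 0 < r) (hr1 : r < 1) :
    closure (annulus r) = {z : ℂ | r ≤ ‖z‖ ∧ ‖z‖ ≤ 1} := by
  apply subset_antisymm
  · apply closure_minimal
    · intro z hz; exact ⟨hz.1.le, hz.2.le⟩
    · exact (isClosed_Icc (a := r) (b := 1)).preimage continuous_norm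
  · rintro z ⟨h1, h2⟩
    have hz0 : ‖z‖ ≠ 0 := ne_of_gt (lt_of_lt_of_le hr0 h1)
    set f : ℝ → ℂ := fun s => ((s / ‖z‖ : ℝ) : ℂ) * z with hf
    have hfc : Continuous f := by
      apply Continuous.mul _ continuous_const
      exact Complex.continuous_ofReal.comp (continuous_id.div_const _)
    have himg : f '' (Set.Ioo r 1) ⊆ annulus r := by
      rintro w ⟨s, hs, rfl⟩
      have hs0 : 0 < s := lt_trans hr0 hs.1
      have : ‖f s‖ = s := by
        simp [hf, norm_mul, Complex.norm_real, Real.norm_eq_abs, abs_div, abs_of_pos hs0,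
          abs_of_pos (lt_of_lt_of_le hr0 h1)]
        field_simp
      exact ⟨by rw [this]; exact hs.1, by rw [this]; exact hs.2⟩
    have hzf : z = f (‖z‖) := by
      show z = ((‖z‖ / ‖z‖ : ℝ) : ℂ) * z
      rw [div_self hz0]; norm_num
    have h3 : ‖z‖ ∈ closure (Set.Ioo r 1) := by
      rw [closure_Ioo (ne_of_lt hr1)]; exact ⟨h1, h2⟩
    have : f (‖z‖) ∈ closure (f '' Set.Ioo r 1) :=
      (image_closure_subset_closure_image hfc) ⟨_, h3, rfl⟩
    rw [hzf]
    exact closure_mono himg this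

lemma frontier_annulus (r : ℝ) (hr0 : 0 < r) (hr1 : r < 1) :
    frontier (annulus r) = {z : ℂ | ‖z‖ = r ∨ ‖z‖ = 1} := by
  rw [frontier, (annulus_isOpen r).interior_eq, closure_annulus r hr0 hr1]
  ext z
  simp only [mem_diff, mem_setOf_eq, annulus, not_and_or, not_lt]
  constructor
  · rintro ⟨⟨h1, h2⟩, h3 | h3⟩
    · exact Or.inl (le_antisymm h3 h1)
    · exact Or.inr (le_antisymm h2 h3)
  · rintro (h | h) <;> rw [h]
    · exact ⟨⟨le_refl _, hr1.le⟩, Or.inl (le_refl _)⟩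
    · exact ⟨⟨hr1.le, le_refl _⟩, Or.inr (le_refl _)⟩

lemma tanh_half (x : ℝ) : Real.tanh (x/2) = (Real.exp x - 1)/(Real.exp x + 1) := by
  have hu : Real.exp x = Real.exp (x/2) * Real.exp (x/2) := by
    rw [← Real.exp_add]; ring_nf
  have h1 : 0 < Real.exp (x/2) := Real.exp_pos _
  rw [Real.tanh_eq_sinh_div_cosh, Real.sinh_eq, Real.cosh_eq, hu, Real.exp_neg]
  have h2 : Real.exp (x/2) * Real.exp (x/2) + 1 > 0 := by positivity
  field_simp

lemma cr_lb1 {a x b y : ℂ} {m : ℝ} (hm : 0 < m) (hax : ‖a - x‖ = m)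
    (hby0 : 0 < ‖b - y‖) (hle : ‖b - y‖ ≤ ‖a - b‖) :
    ‖x - y‖ / m ≤ crossRatio a x b y := by
  unfold crossRatio
  rw [hax, div_le_div_iff₀ hm (by positivity)]
  have hL : 0 ≤ ‖x - y‖ := by positivity
  nlinarith [mul_le_mul_of_nonneg_left hle (mul_nonneg hL hm.le)]

lemma cr_lb2 {a x b y : ℂ} {m : ℝ} (hm : 0 < m) (hby : ‖b - y‖ = m)
    (hax0 : 0 < ‖a - x‖) (hle : ‖a - x‖ ≤ ‖a - b‖) :
    ‖x - y‖ / m ≤ crossRatio a x b y := by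
  unfold crossRatio
  rw [hby, div_le_div_iff₀ hm (by positivity)]
  have hL : 0 ≤ ‖x - y‖ := by positivity
  nlinarith [mul_le_mul_of_nonneg_left hle (mul_nonneg hL hm.le)]

-- crossRatio upper bound
lemma cr_ub {a x b y : ℂ} {m : ℝ} (hm : 0 < m) (hax : m ≤ ‖a - x‖)
    (hby : m ≤ ‖b - y‖) :
    crossRatio a x b y ≤ (‖x - y‖ / m)^2 + 2 * (‖x - y‖ / m) := by
  unfold crossRatio
  set L := ‖x - y‖ with hL
  set A := ‖a - x‖ with hA
  set B := ‖b - y‖ with hB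
  have hA0 : 0 < A := lt_of_lt_of_le hm hax
  have hB0 : 0 < B := lt_of_lt_of_le hm hby
  have hL0 : 0 ≤ L := by positivity
  have htri : ‖a - b‖ ≤ A + L + B := by
    calc ‖a - b‖ ≤ ‖a - x‖ + ‖x - b‖ :=
          norm_sub_le_norm_sub_add_norm_sub a x b
    _ ≤ ‖a - x‖ + (‖x - y‖ + ‖y - b‖) := by
          linarith [norm_sub_le_norm_sub_add_norm_sub x y b]
    _ = A + L + ‖b - y‖ := by rw [norm_sub_rev y b]; ring
    _ = A + L + B := rfl
  rw [div_le_iff₀ (by positivity)]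
  have key : ((L/m)^2 + 2*(L/m)) * (A*B) = (L^2 + 2*L*m)*(A*B)/m^2 := by
    field_simp
  rw [key, le_div_iff₀ (by positivity)]
  have h1 : ‖a - b‖ * L * (m^2) ≤ (A + L + B) * L * m^2 :=
    mul_le_mul_of_nonneg_right (mul_le_mul_of_nonneg_right htri hL0) (by positivity)
  have h2 : m * m ≤ A * B := mul_le_mul hax hby hm.le hA0.le
  calc ‖a - b‖ * L * m ^ 2 ≤ (A + L + B) * L * m^2 := h1
  _ ≤ (L ^ 2 * (A*B) + 2 * L * m * (A * B)) := by
      nlinarith [mul_le_mul_of_nonneg_left h2 (mul_nonneg hL0 hL0),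
        mul_le_mul_of_nonneg_left hby (by positivity : (0:ℝ) ≤ L*m*A),
        mul_le_mul_of_nonneg_left hax (by positivity : (0:ℝ) ≤ L*m*B)]
  _ = (L ^ 2 + 2 * L * m) * (A * B) := by ring

lemma arith2 {E K : ℝ} (hK0 : 0 ≤ K) (hE_lb : 1 + K ≤ E) :
    K * (E + 1) ≤ (E - 1) * (K + 2) := by nlinarith

lemma arith3 {E K : ℝ} (hK0 : 0 ≤ K) (hE_lb : 1 + K ≤ E)
    (hE_ub : E ≤ 1 + (K ^ 2 + 2 * K)) :
    (E - 1) * (K + 2) ≤ 2 * K * (E + 1) := by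
  rcases le_or_gt 2 K with hK2 | hK2
  · nlinarith [mul_nonneg (by linarith : (0:ℝ) ≤ E) (by linarith : (0:ℝ) ≤ K - 2)]
  · nlinarith [mul_nonneg (by linarith : (0:ℝ) ≤ 2 - K)
      (by linarith : (0:ℝ) ≤ 1 + (K ^ 2 + 2 * K) - E), pow_nonneg hK0 3]

lemma cr_nonneg (a x b y : ℂ) : 0 ≤ crossRatio a x b y := by
  unfold crossRatio; positivity

/-- The sharp inequality chain
`(1/2)s ≤ j* ≤ th(δ/2) ≤ 2j* ≤ 2s` in the annular ring `R(r,1)`. -/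
theorem stmt10 (r : ℝ) (hr0 : 0 < r) (hr1 : r < 1) (x y : ℂ)
    (hx : x ∈ annulus r) (hy : y ∈ annulus r) :
    (1 / 2) * sMetric (annulus r) x y ≤ jStar (annulus r) x y ∧
    jStar (annulus r) x y ≤ Real.tanh (deltaMetric (annulus r) x y / 2) ∧
    Real.tanh (deltaMetric (annulus r) x y / 2) ≤ 2 * jStar (annulus r) x y ∧
    2 * jStar (annulus r) x y ≤ 2 * sMetric (annulus r) x y := by
  obtain ⟨hx1, hx2⟩ := hx
  obtain ⟨hy1, hy2⟩ := hy
  simp only [sMetric, jStar, deltaMetric]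
  set F := frontier (annulus r) with hFdef
  have hFr : ∀ z : ℂ, z ∈ F ↔ ‖z‖ = r ∨ ‖z‖ = 1 := by
    intro z; rw [hFdef, frontier_annulus r hr0 hr1]; rfl
  have h1F : (1:ℂ) ∈ F := (hFr 1).mpr (Or.inr (by simp))
  have hFne : F.Nonempty := ⟨1, h1F⟩
  have hFcpt : IsCompact F := by
    apply Metric.isCompact_of_isClosed_isBounded isClosed_frontier
    apply Bornology.IsBounded.subset (Metric.isBounded_closedBall (x := (0:ℂ)) (r := 1))
    intro z hz
    rcases (hFr z).mp hz with h | h <;>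
      simp [Metric.mem_closedBall, Complex.dist_eq, h, hr1.le]
  have hxF : x ∉ F := by
    intro h; rcases (hFr x).mp h with h' | h' <;> [exact absurd h' (ne_of_gt hx1); exact absurd h' (ne_of_lt hx2)]
  have hyF : y ∉ F := by
    intro h; rcases (hFr y).mp h with h' | h' <;> [exact absurd h' (ne_of_gt hy1); exact absurd h' (ne_of_lt hy2)]
  set dx := Metric.infDist x F with hdxdef
  set dy := Metric.infDist y F with hdydef
  have hdistx : ∀ a ∈ F, dx ≤ ‖a - x‖ := by
    intro a ha
    rw [norm_sub_rev, ← Complex.dist_eq]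
    exact Metric.infDist_le_dist_of_mem ha
  have hdisty : ∀ b ∈ F, dy ≤ ‖b - y‖ := by
    intro b hb
    rw [norm_sub_rev, ← Complex.dist_eq]
    exact Metric.infDist_le_dist_of_mem hb
  have hdx : 0 < dx := by
    obtain ⟨a, haF, hda⟩ := hFcpt.exists_infDist_eq_dist hFne x
    rw [hdxdef, hda, dist_pos]; exact fun h => hxF (h ▸ haF)
  have hdy : 0 < dy := by
    obtain ⟨b, hbF, hdb⟩ := hFcpt.exists_infDist_eq_dist hFne y
    rw [hdydef, hdb, dist_pos]; exact fun h => hyF (h ▸ hbF)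
  set m := min dx dy with hmdef
  have hm : 0 < m := lt_min hdx hdy
  set L := ‖x - y‖ with hLdef
  have hL0 : 0 ≤ L := by positivity
  have hax_m : ∀ a ∈ F, m ≤ ‖a - x‖ :=
    fun a ha => le_trans (min_le_left _ _) (hdistx a ha)
  have hby_m : ∀ b ∈ F, m ≤ ‖b - y‖ :=
    fun b hb => le_trans (min_le_right _ _) (hdisty b hb)
  -- the sInf denominator
  set S1 := (fun z => ‖x - z‖ + ‖z - y‖) '' F with hS1def
  have hS1ne : S1.Nonempty := ⟨_, 1, h1F, rfl⟩
  have hS1bdd : BddBelow S1 := by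
    refine ⟨0, ?_⟩; rintro v ⟨a, ha, rfl⟩; positivity
  set D := sInf S1 with hDdef
  have hD_ge_L : L ≤ D := by
    apply le_csInf hS1ne
    rintro v ⟨a, ha, rfl⟩
    exact norm_sub_le_norm_sub_add_norm_sub x a y
  have hD_ge_2m : 2 * m ≤ D := by
    apply le_csInf hS1ne
    rintro v ⟨a, ha, rfl⟩
    have h1 := hax_m a ha
    have h2 := hby_m a ha
    rw [norm_sub_rev a x] at h1
    show 2 * m ≤ ‖x - a‖ + ‖a - y‖
    linarith
  have hD_le : D ≤ L + 2 * m := by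
    rcases le_total dx dy with h | h
    · have hmeq : m = dx := min_eq_left h
      obtain ⟨a, haF, hda⟩ := hFcpt.exists_infDist_eq_dist hFne x
      have hxa : ‖x - a‖ = m := by rw [hmeq, hdxdef, hda, Complex.dist_eq]
      have : ‖x - a‖ + ‖a - y‖ ≤ L + 2 * m := by
        have htr : ‖a - y‖ ≤ ‖a - x‖ + L := norm_sub_le_norm_sub_add_norm_sub a x y
        rw [norm_sub_rev a x, hxa] at htr
        linarith [hxa]
      exact le_trans (csInf_le hS1bdd ⟨a, haF, rfl⟩) this
    · have hmeq : m = dy := min_eq_right h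
      obtain ⟨b, hbF, hdb⟩ := hFcpt.exists_infDist_eq_dist hFne y
      have hyb : ‖b - y‖ = m := by
        rw [hmeq, hdydef, hdb, Complex.dist_eq, norm_sub_rev]
      have : ‖x - b‖ + ‖b - y‖ ≤ L + 2 * m := by
        have htr : ‖x - b‖ ≤ L + ‖y - b‖ := norm_sub_le_norm_sub_add_norm_sub x y b
        rw [norm_sub_rev y b, hyb] at htr
        linarith [hyb]
      exact le_trans (csInf_le hS1bdd ⟨b, hbF, rfl⟩) this
  have hD0 : 0 < D := lt_of_lt_of_le (by linarith) hD_ge_2m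
  -- the sSup
  set S2 := (fun p : ℂ × ℂ => Real.log (1 + crossRatio p.1 x p.2 y)) '' (F ×ˢ F) with hS2def
  have hS2ne : S2.Nonempty := ⟨_, (1, 1), ⟨h1F, h1F⟩, rfl⟩
  set K := L / m with hKdef
  have hK0 : 0 ≤ K := by positivity
  have hcr_ub : ∀ p : ℂ × ℂ, p ∈ F ×ˢ F → crossRatio p.1 x p.2 y ≤ K ^ 2 + 2 * K :=
    fun p hp => cr_ub hm (hax_m p.1 hp.1) (hby_m p.2 hp.2)
  have hS2bdd : BddAbove S2 := by
    refine ⟨Real.log (1 + (K ^ 2 + 2 * K)), ?_⟩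
    rintro v ⟨p, hp, rfl⟩
    exact Real.log_le_log (by linarith [cr_nonneg p.1 x p.2 y]) (by linarith [hcr_ub p hp])
  set δ := sSup S2 with hδdef
  have hδ_ub : δ ≤ Real.log (1 + (K ^ 2 + 2 * K)) := by
    apply csSup_le hS2ne
    rintro v ⟨p, hp, rfl⟩
    exact Real.log_le_log (by linarith [cr_nonneg p.1 x p.2 y]) (by linarith [hcr_ub p hp])
  -- lower bound construction
  have hδ_lb : Real.log (1 + K) ≤ δ := by
    have key : ∃ p : ℂ × ℂ, p ∈ F ×ˢ F ∧ K ≤ crossRatio p.1 x p.2 y := by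
      rcases le_total dx dy with h | h
      · have hmeq : m = dx := min_eq_left h
        obtain ⟨a, haF, hda⟩ := hFcpt.exists_infDist_eq_dist hFne x
        have haxm : ‖a - x‖ = m := by
          rw [norm_sub_rev, ← Complex.dist_eq, ← hda, hmeq]
        rcases (hFr a).mp haF with ha | ha
        · -- a on inner circle; take b = y/|y|
          set ρ := ‖y‖ with hρ
          have hρ0 : 0 < ρ := lt_trans hr0 hy1
          set b : ℂ := ((ρ⁻¹ : ℝ) : ℂ) * y with hb
          have habs_b : ‖b‖ = 1 := by
            rw [hb, norm_mul, Complex.norm_real, Real.norm_eq_abs, abs_of_pos (inv_pos.mpr hρ0), ← hρ,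
              inv_mul_cancel₀ (ne_of_gt hρ0)]
          have hbF : b ∈ F := (hFr b).mpr (Or.inr habs_b)
          have hby_eq : ‖b - y‖ = 1 - ρ := by
            have e : b - y = ((ρ⁻¹ - 1 : ℝ) : ℂ) * y := by rw [hb]; push_cast; ring
            rw [e, norm_mul, Complex.norm_real, Real.norm_eq_abs, ← hρ,
              abs_of_nonneg (by rw [sub_nonneg]; exact (one_le_inv₀ hρ0).mpr hy2.le)]
            field_simp
          have hby0 : 0 < ‖b - y‖ := by rw [hby_eq]; linarith
          have hble : ‖b - y‖ ≤ ‖a - b‖ := by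
            have h1 : ‖b‖ ≤ ‖b - a‖ + ‖a‖ := by
              calc ‖b‖ = ‖(b - a) + a‖ := by ring_nf
              _ ≤ _ := norm_add_le _ _
            rw [habs_b, ha] at h1
            rw [hby_eq, norm_sub_rev]
            linarith
          exact ⟨(a, b), ⟨haF, hbF⟩, cr_lb1 hm haxm hby0 hble⟩
        · -- a on outer circle; take b = -a
          set b : ℂ := -a with hb
          have hbF : b ∈ F := (hFr b).mpr (Or.inr (by rw [hb, norm_neg]; exact ha))
          have hab : ‖a - b‖ = 2 := by
            have : a - b = 2 * a := by rw [hb]; ring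
            rw [this, norm_mul, Complex.norm_two, ha, mul_one]
          have hby0 : 0 < ‖b - y‖ := lt_of_lt_of_le hm (hby_m b hbF)
          have hble : ‖b - y‖ ≤ ‖a - b‖ := by
            have : ‖b - y‖ ≤ ‖b‖ + ‖y‖ := by
              rw [show b - y = b + (-y) by ring]
              calc ‖b + (-y)‖ ≤ ‖b‖ + ‖-y‖ :=
                    norm_add_le _ _
              _ = ‖b‖ + ‖y‖ := by simp
            have hb1 : ‖b‖ = 1 := by rw [hb, norm_neg]; exact ha
            rw [hab]; rw [hb1] at this; linarith
          exact ⟨(a, b), ⟨haF, hbF⟩, cr_lb1 hm haxm hby0 hble⟩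
      · have hmeq : m = dy := min_eq_right h
        obtain ⟨b, hbF, hdb⟩ := hFcpt.exists_infDist_eq_dist hFne y
        have hbym : ‖b - y‖ = m := by
          rw [norm_sub_rev, ← Complex.dist_eq, ← hdb, hmeq]
        rcases (hFr b).mp hbF with hbr | hbr
        · -- b on inner circle; take a = x/|x|
          set ρ := ‖x‖ with hρ
          have hρ0 : 0 < ρ := lt_trans hr0 hx1
          set a : ℂ := ((ρ⁻¹ : ℝ) : ℂ) * x with haa
          have habs_a : ‖a‖ = 1 := by
            rw [haa, norm_mul, Complex.norm_real, Real.norm_eq_abs, abs_of_pos (inv_pos.mpr hρ0), ← hρ,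
              inv_mul_cancel₀ (ne_of_gt hρ0)]
          have haF : a ∈ F := (hFr a).mpr (Or.inr habs_a)
          have hax_eq : ‖a - x‖ = 1 - ρ := by
            have e : a - x = ((ρ⁻¹ - 1 : ℝ) : ℂ) * x := by rw [haa]; push_cast; ring
            rw [e, norm_mul, Complex.norm_real, Real.norm_eq_abs, ← hρ,
              abs_of_nonneg (by rw [sub_nonneg]; exact (one_le_inv₀ hρ0).mpr hx2.le)]
            field_simp
          have hax0 : 0 < ‖a - x‖ := by rw [hax_eq]; linarith
          have hle : ‖a - x‖ ≤ ‖a - b‖ := by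
            have h1 : ‖a‖ ≤ ‖a - b‖ + ‖b‖ := by
              calc ‖a‖ = ‖(a - b) + b‖ := by ring_nf
              _ ≤ _ := norm_add_le _ _
            rw [habs_a, hbr] at h1
            rw [hax_eq]
            linarith
          exact ⟨(a, b), ⟨haF, hbF⟩, cr_lb2 hm hbym hax0 hle⟩
        · -- b on outer circle; take a = -b
          set a : ℂ := -b with haa
          have haF : a ∈ F := (hFr a).mpr (Or.inr (by rw [haa, norm_neg]; exact hbr))
          have hab : ‖a - b‖ = 2 := by
            have : a - b = (-2) * b := by rw [haa]; ring
            rw [this, norm_mul, norm_neg, Complex.norm_two, hbr, mul_one]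
          have hax0 : 0 < ‖a - x‖ := lt_of_lt_of_le hm (hax_m a haF)
          have hle : ‖a - x‖ ≤ ‖a - b‖ := by
            have ha1 : ‖a‖ = 1 := by rw [haa, norm_neg]; exact hbr
            have : ‖a - x‖ ≤ ‖a‖ + ‖x‖ := by
              rw [show a - x = a + (-x) by ring]
              calc ‖a + (-x)‖ ≤ ‖a‖ + ‖-x‖ := norm_add_le _ _
              _ = ‖a‖ + ‖x‖ := by simp
            rw [hab]; rw [ha1] at this; linarith
          exact ⟨(a, b), ⟨haF, hbF⟩, cr_lb2 hm hbym hax0 hle⟩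
    obtain ⟨p, hp, hcr⟩ := key
    calc Real.log (1 + K) ≤ Real.log (1 + crossRatio p.1 x p.2 y) :=
          Real.log_le_log (by linarith) (by linarith)
    _ ≤ δ := le_csSup hS2bdd ⟨p, hp, rfl⟩
  -- final arithmetic
  set E := Real.exp δ with hEdef
  have hE_lb : 1 + K ≤ E := by
    have := Real.exp_le_exp.mpr hδ_lb
    rwa [Real.exp_log (by linarith)] at this
  have hE_ub : E ≤ 1 + (K ^ 2 + 2 * K) := by
    have := Real.exp_le_exp.mpr hδ_ub
    rwa [Real.exp_log (by positivity)] at this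
  have hE1 : 1 ≤ E := by linarith
  have htanh : Real.tanh (δ / 2) = (E - 1) / (E + 1) := tanh_half δ
  have hj : L / (L + 2 * m) = K / (K + 2) := by
    rw [hKdef]
    have hLm0 : 0 ≤ L / m := div_nonneg hL0 hm.le
    rw [div_eq_div_iff (by linarith : (0:ℝ) < L + 2 * m).ne' (by linarith : (0:ℝ) < L / m + 2).ne']
    field_simp
  clear_value E δ K D m L dx dy S2 S1 F
  refine ⟨?_, ?_, ?_, ?_⟩
  · -- (1/2) s ≤ j*
    rw [show (1/2 : ℝ) * (L / D) = L / (2 * D) by ring,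
      div_le_div_iff₀ (by linarith : (0:ℝ) < 2 * D) (by linarith : (0:ℝ) < L + 2 * m)]
    nlinarith [mul_le_mul_of_nonneg_left (by linarith : L + 2 * m ≤ 2 * D) hL0]
  · -- j* ≤ tanh(δ/2)
    rw [htanh, hj, div_le_div_iff₀ (by linarith : (0:ℝ) < K + 2) (by linarith : (0:ℝ) < E + 1)]
    exact arith2 hK0 hE_lb
  · -- tanh(δ/2) ≤ 2 j*
    rw [htanh, hj, show (2:ℝ) * (K / (K + 2)) = (2 * K) / (K + 2) by ring,
      div_le_div_iff₀ (by linarith : (0:ℝ) < E + 1) (by linarith : (0:ℝ) < K + 2)]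
    exact arith3 hK0 hE_lb hE_ub
  · -- 2 j* ≤ 2 s
    have : L / (L + 2 * m) ≤ L / D := by
      rw [div_le_div_iff₀ (by linarith : (0:ℝ) < L + 2 * m) (by linarith : (0:ℝ) < D)]
      nlinarith [mul_le_mul_of_nonneg_left hD_le hL0]
    linarith
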